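/- Let Ψ : [n] × [m] → ℝ≥0 be a normalized valuation matrix and φ : [s] × [m] → ℝ≥0 a signaling scheme (i.e., for each j, ∑_{σ} φ(σ,j) = 1). Suppose σ ≠ σ' are two signals such that the index maximizing i ↦ ∑_j φ(σ,j)·Ψ(i,j) equals the index maximizing i ↦ ∑_j φ(σ',j)·Ψ(i,j), and likewise the second-maximizing indices coincide. Define φ* on s−1 signals by merging σ and σ' into a single signal σ* with φ*(σ*,j) = φ(σ,j) + φ(σ',j) and keeping all other signals unchanged. Then φ* is a valid signaling scheme and the revenue ∑_τ secondmax_i ∑_j φ*(τ,j)·Ψ(i,j) equals ∑_τ secondmax_i ∑_j φ(τ,j)·Ψ(i,j). -/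

import Mathlib

open Finset

/-- The second-largest value of `f` (counting multiplicity): the supremum of
`min (f i) (f j)` over pairs of distinct indices. -/
noncomputable def secondmax {ι : Type*} [Fintype ι] (f : ι → ℝ) : ℝ :=
  sSup {x | ∃ i j : ι, i ≠ j ∧ x = min (f i) (f j)}

/-- A signaling scheme: nonnegative entries, and for each good `j` the signal
probabilities sum to one. -/
def IsScheme {S J : Type*} [Fintype S] (φ : S → J → ℝ) : Prop :=
  (∀ σ j, 0 ≤ φ σ j) ∧ ∀ j, ∑ σ, φ σ j = 1

/-- Revenue of a signaling scheme under normalized valuations `Ψ`. -/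
noncomputable def Rev {S : Type*} [Fintype S] {n : ℕ} {J : Type*} [Fintype J]
    (Ψ : Fin n → J → ℝ) (φ : S → J → ℝ) : ℝ :=
  ∑ σ, secondmax (fun i => ∑ j, φ σ j * Ψ i j)

lemma secondmax_eq_aux {n : ℕ} (f : Fin n → ℝ) (i₁ i₂ : Fin n) (hi : i₁ ≠ i₂)
    (h1 : ∀ i, f i ≤ f i₁) (h2 : ∀ i, i ≠ i₁ → f i ≤ f i₂) :
    secondmax f = f i₂ := by
  apply IsGreatest.csSup_eq
  constructor
  · exact ⟨i₁, i₂, hi, (min_eq_right (h1 i₂)).symm⟩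
  · rintro x ⟨i, j, hij, rfl⟩
    by_cases h : i = i₁
    · subst h
      exact le_trans (min_le_right _ _) (h2 j (fun hj => hij hj.symm))
    · exact le_trans (min_le_left _ _) (h2 i h)

lemma sum_merge_aux {s : ℕ} (σ σ' : Fin s) (hσσ' : σ ≠ σ') (h : Fin s → ℝ) :
    ∑ τ ∈ univ.erase σ', (if τ = σ then h σ + h σ' else h τ) = ∑ τ, h τ := by
  have hσ : σ ∈ univ.erase σ' := mem_erase.2 ⟨hσσ', mem_univ σ⟩
  calc ∑ τ ∈ univ.erase σ', (if τ = σ then h σ + h σ' else h τ)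
      = ∑ τ ∈ univ.erase σ', (h τ + if τ = σ then h σ' else 0) := by
        apply sum_congr rfl; intro τ _
        by_cases hτ : τ = σ <;> simp [hτ]
    _ = (∑ τ ∈ univ.erase σ', h τ) + h σ' := by
        rw [sum_add_distrib, sum_ite_eq' _ σ, if_pos hσ]
    _ = ∑ τ, h τ := sum_erase_add _ _ (mem_univ σ')

/-- Merging two signals whose max- and secondmax-realizing bidders coincide yields a
valid signaling scheme on one fewer signal with the same revenue. -/
theorem stmt0 {n s m : ℕ} (hn : 2 ≤ n)
    (Ψ : Fin n → Fin m → ℝ) (hΨ : ∀ i j, 0 ≤ Ψ i j)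
    (φ : Fin s → Fin m → ℝ) (hφ : IsScheme φ)
    (σ σ' : Fin s) (hσσ' : σ ≠ σ') (i₁ i₂ : Fin n) (hi : i₁ ≠ i₂)
    (hmax : ∀ τ ∈ ({σ, σ'} : Finset (Fin s)), ∀ i,
      ∑ j, φ τ j * Ψ i j ≤ ∑ j, φ τ j * Ψ i₁ j)
    (hsec : ∀ τ ∈ ({σ, σ'} : Finset (Fin s)), ∀ i, i ≠ i₁ →
      ∑ j, φ τ j * Ψ i j ≤ ∑ j, φ τ j * Ψ i₂ j) :
    IsScheme (fun (τ : {τ : Fin s // τ ≠ σ'}) j =>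
        if τ.1 = σ then φ σ j + φ σ' j else φ τ.1 j) ∧
    Rev Ψ (fun (τ : {τ : Fin s // τ ≠ σ'}) j =>
        if τ.1 = σ then φ σ j + φ σ' j else φ τ.1 j) = Rev Ψ φ := by
  obtain ⟨hφ0, hφ1⟩ := hφ
  have hmem : ∀ τ ∈ ({σ, σ'} : Finset (Fin s)), True := fun _ _ => trivial
  have hσmem : σ ∈ ({σ, σ'} : Finset (Fin s)) := mem_insert_self _ _
  have hσ'mem : σ' ∈ ({σ, σ'} : Finset (Fin s)) := mem_insert_of_mem (mem_singleton_self _)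
  have hsub : ∀ (F : Fin s → ℝ),
      (∑ τ : {τ : Fin s // τ ≠ σ'}, F τ.1) = ∑ τ ∈ univ.erase σ', F τ := by
    intro F
    exact (Finset.sum_subtype (univ.erase σ')
      (fun τ => by simp [mem_erase]) F).symm
  constructor
  · constructor
    · intro τ j
      by_cases hτ : τ.1 = σ <;> simp [hτ, add_nonneg (hφ0 σ j) (hφ0 σ' j), hφ0]
    · intro j
      have := hsub (fun τ => if τ = σ then φ σ j + φ σ' j else φ τ j)
      simpa [this, sum_merge_aux σ σ' hσσ' (fun τ => φ τ j)] using hφ1 j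
  · -- revenue
    set f : Fin s → Fin n → ℝ := fun τ i => ∑ j, φ τ j * Ψ i j with hf
    have hGσ : secondmax (f σ) = f σ i₂ :=
      secondmax_eq_aux _ i₁ i₂ hi (hmax σ hσmem) (hsec σ hσmem)
    have hGσ' : secondmax (f σ') = f σ' i₂ :=
      secondmax_eq_aux _ i₁ i₂ hi (hmax σ' hσ'mem) (hsec σ' hσ'mem)
    have hmerge : secondmax (fun i => ∑ j, (φ σ j + φ σ' j) * Ψ i j)
        = f σ i₂ + f σ' i₂ := by
      have key : ∀ i, (∑ j, (φ σ j + φ σ' j) * Ψ i j) = f σ i + f σ' i := by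
        intro i; simp [hf, add_mul, Finset.sum_add_distrib]
      rw [show (fun i => ∑ j, (φ σ j + φ σ' j) * Ψ i j) = fun i => f σ i + f σ' i
        from funext key]
      exact secondmax_eq_aux _ i₁ i₂ hi
        (fun i => add_le_add (hmax σ hσmem i) (hmax σ' hσ'mem i))
        (fun i h => add_le_add (hsec σ hσmem i h) (hsec σ' hσ'mem i h))
    have hsubR := hsub (fun τ => secondmax (fun i => ∑ j,
        (if τ = σ then φ σ j + φ σ' j else φ τ j) * Ψ i j))
    calc Rev Ψ (fun (τ : {τ : Fin s // τ ≠ σ'}) j =>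
        if τ.1 = σ then φ σ j + φ σ' j else φ τ.1 j)
        = ∑ τ ∈ univ.erase σ', secondmax (fun i => ∑ j,
            (if τ = σ then φ σ j + φ σ' j else φ τ j) * Ψ i j) := hsubR
      _ = ∑ τ ∈ univ.erase σ',
            (if τ = σ then secondmax (f σ) + secondmax (f σ') else secondmax (f τ)) := by
          apply sum_congr rfl
          intro τ _
          by_cases hτ : τ = σ
          · subst hτ
            simp only [eq_self_iff_true, if_true]
            rw [hmerge, hGσ, hGσ']
          · simp only [if_neg hτ]; rfl
      _ = ∑ τ, secondmax (f τ) := sum_merge_aux σ σ' hσσ' _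
      _ = Rev Ψ φ := rfl
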